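/- arXiv:1901.07898 — 2 statements merged into one kernel-verified Lean document; each statement's English description precedes it below -/
import Mathlib

section
/- Let $m \ge 2$ be an integer and let $s > 0$ be real. Then $\prod_{k=0}^{m-1} \Gamma\!\left(\tfrac{s+1+k}{m}\right)^{\frac{2k+1-m}{m}} \Big/ \prod_{k=0}^{m-1} \Gamma\!\left(\tfrac{s+k}{m}\right)^{\frac{2k+1-m}{m}} = \dfrac{\Gamma\!\left(\tfrac{s}{m}\right)^{\frac{m+1}{m}} \Gamma\!\left(\tfrac{s}{m}+1\right)^{\frac{m-1}{m}}}{(2\pi)^{\frac{m-1}{m}}\, m^{\frac{1-2s}{m}}\, \Gamma(s)^{\frac{2}{m}}}$, where all powers are real powers of positive real numbers and $\Gamma$ is the real Gamma function. -/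
open Real Finset

open Polynomial in
lemma prod_one_sub_root (n : ℕ) (hn : 2 ≤ n) :
    ∏ k ∈ Finset.range (n - 1), ((1 : ℂ) - Complex.exp (2 * π * Complex.I / n) ^ (k + 1)) = n := by
  set ζ : ℂ := Complex.exp (2 * π * Complex.I / n) with hζdef
  have hn0 : (n : ℕ) ≠ 0 := by omega
  have hζ : IsPrimitiveRoot ζ n := Complex.isPrimitiveRoot_exp n hn0
  have himg : Finset.image (ζ ^ ·) (Finset.range n) = Polynomial.nthRootsFinset n (1 : ℂ) := by
    apply Finset.eq_of_subset_of_card_le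
    · intro x hx
      obtain ⟨k, hk, rfl⟩ := Finset.mem_image.mp hx
      rw [Polynomial.mem_nthRootsFinset (by omega) (1 : ℂ)]
      rw [← pow_mul, mul_comm, pow_mul, hζ.pow_eq_one, one_pow]
    · rw [hζ.card_nthRootsFinset, Finset.card_image_of_injOn hζ.injOn_pow, Finset.card_range]
  have key : ∏ k ∈ Finset.range n, (X - C (ζ ^ k)) = X ^ n - 1 := by
    rw [X_pow_sub_one_eq_prod (by omega) hζ, ← himg,
      Finset.prod_image (fun a ha b hb h => hζ.injOn_pow ha hb h)]
  have h2 : (∏ k ∈ Finset.range (n - 1), (X - C (ζ ^ (k + 1)))) * (X - 1) = X ^ n - 1 := by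
    rw [← key]
    have : n = (n - 1) + 1 := by omega
    rw [this, Finset.prod_range_succ' (fun k => (X : ℂ[X]) - C (ζ ^ k)) (n - 1)]
    simp [mul_comm]
  have h3 : (∏ k ∈ Finset.range (n - 1), (X - C (ζ ^ (k + 1))))
      = ∑ i ∈ Finset.range n, (X : ℂ[X]) ^ i := by
    have hne : (X - 1 : ℂ[X]) ≠ 0 := by
      have := X_sub_C_ne_zero (1 : ℂ)
      simpa using this
    apply mul_right_cancel₀ hne
    rw [h2, geom_sum_mul]
  have := congrArg (Polynomial.eval 1) h3
  simpa [Polynomial.eval_prod, Polynomial.eval_finset_sum] using this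

lemma abs_one_sub_exp (n : ℕ) (hn : 2 ≤ n) (k : ℕ) (hk : k ∈ Finset.range (n-1)) :
    ‖(1 - Complex.exp (2 * π * Complex.I / n) ^ (k + 1))‖
      = 2 * Real.sin ((k + 1) * π / n) := by
  have h1 : Complex.exp (2 * π * Complex.I / n) ^ (k + 1)
      = Complex.exp ((((k+1) * (2 * π) / n : ℝ)) * Complex.I) := by
    rw [← Complex.exp_nat_mul]
    congr 1
    push_cast
    ring
  set θ : ℝ := (k+1) * (2 * π) / n with hθ
  have e1 : Complex.exp ((θ/2 : ℝ) * Complex.I) * Complex.exp (-((θ/2 : ℝ)) * Complex.I) = 1 := by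
    rw [← Complex.exp_add, ← Complex.exp_zero]
    congr 1
    push_cast
    ring
  have e2 : Complex.exp ((θ/2 : ℝ) * Complex.I) * Complex.exp ((θ/2 : ℝ) * Complex.I)
      = Complex.exp ((θ : ℝ) * Complex.I) := by
    rw [← Complex.exp_add]
    congr 1
    push_cast
    ring
  have h2 : (1 : ℂ) - Complex.exp ((θ : ℝ) * Complex.I)
      = -Complex.exp ((θ/2 : ℝ) * Complex.I) * (2 * Complex.sin (θ/2 : ℝ) * Complex.I) := by
    symm
    calc -Complex.exp ((θ/2 : ℝ) * Complex.I) * (2 * Complex.sin (θ/2 : ℝ) * Complex.I)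
        = -Complex.exp ((θ/2 : ℝ) * Complex.I) *
            ((Complex.exp (-((θ/2:ℝ)) * Complex.I) - Complex.exp ((θ/2:ℝ) * Complex.I))
              * (Complex.I * Complex.I)) := by
          rw [Complex.sin]
          push_cast
          ring
      _ = Complex.exp ((θ/2 : ℝ) * Complex.I) * Complex.exp (-((θ/2:ℝ)) * Complex.I)
            - Complex.exp ((θ/2 : ℝ) * Complex.I) * Complex.exp ((θ/2:ℝ) * Complex.I) := by
          rw [Complex.I_mul_I]
          ring
      _ = 1 - Complex.exp ((θ : ℝ) * Complex.I) := by rw [e1, e2]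
  rw [h1, h2, norm_mul, norm_neg, Complex.norm_exp_ofReal_mul_I, norm_mul, norm_mul,
    ← Complex.ofReal_sin, Complex.norm_real, Real.norm_eq_abs, Complex.norm_I, Complex.norm_two]
  have hk' : (k : ℝ) + 1 < n := by
    have := Finset.mem_range.mp hk
    have : k + 1 < n := by omega
    exact_mod_cast Nat.cast_lt.mpr this
  have hmem1 : 0 < θ/2 := by
    apply div_pos _ two_pos
    apply div_pos (by positivity) (by positivity)
  have hmem2 : θ/2 < π := by
    rw [hθ]
    rw [div_lt_iff₀ (by norm_num : (0:ℝ) < 2), div_lt_iff₀ (by positivity : (0:ℝ) < n)]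
    nlinarith [pi_pos]
  have habs : |Real.sin (θ/2)| = Real.sin (θ/2) :=
    abs_of_nonneg (Real.sin_nonneg_of_nonneg_of_le_pi hmem1.le hmem2.le)
  rw [habs]
  have : θ / 2 = (k+1) * π / n := by rw [hθ]; ring
  rw [this]
  ring

lemma sin_prod (n : ℕ) (hn : 2 ≤ n) :
    ∏ k ∈ Finset.range (n - 1), Real.sin ((k + 1) * π / n) = n / 2 ^ (n - 1) := by
  have h := congrArg (fun z : ℂ => ‖z‖) (prod_one_sub_root n hn)
  rw [norm_prod] at h
  rw [Finset.prod_congr rfl (abs_one_sub_exp n hn)] at h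
  rw [Finset.prod_mul_distrib, Finset.prod_const, Finset.card_range] at h
  have habs : ‖(n : ℂ)‖ = (n : ℝ) := by
    rw [Complex.norm_natCast]
  rw [habs] at h
  field_simp at h ⊢
  simp only [mul_comm π]
  linarith [h]

lemma G1_sq (n : ℕ) (hn : 2 ≤ n) :
    (∏ k ∈ Finset.range (n - 1), Real.Gamma ((k + 1) / n)) ^ 2 = (2 * π) ^ (n - 1) / n := by
  have hrefl : (∏ k ∈ Finset.range (n - 1), Real.Gamma ((k + 1) / n))
      = ∏ k ∈ Finset.range (n - 1), Real.Gamma (1 - ((k : ℝ) + 1) / n) := by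
    rw [← Finset.prod_range_reflect (fun j => Real.Gamma (1 - ((j : ℝ) + 1) / n)) (n - 1)]
    apply Finset.prod_congr rfl
    intro j hj
    have hj' : j < n - 1 := Finset.mem_range.mp hj
    congr 1
    have h1 : ((n - 1 - 1 - j : ℕ) : ℝ) = (n : ℝ) - 2 - j := by
      have : n - 1 - 1 - j = n - (2 + j) := by omega
      rw [this, Nat.cast_sub (by omega)]
      push_cast
      ring
    rw [h1]
    have hnn : (n : ℝ) ≠ 0 := by positivity
    field_simp
    ring
  have key : (∏ k ∈ Finset.range (n - 1), Real.Gamma ((k + 1) / n)) ^ 2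
      = ∏ k ∈ Finset.range (n - 1), (π / Real.sin (π * (((k : ℝ) + 1) / n))) := by
    rw [sq]
    nth_rewrite 2 [hrefl]
    rw [← Finset.prod_mul_distrib]
    apply Finset.prod_congr rfl
    intro k _
    rw [Real.Gamma_mul_Gamma_one_sub]
  rw [key]
  rw [Finset.prod_div_distrib, Finset.prod_const, Finset.card_range]
  have harg : ∀ k ∈ Finset.range (n - 1), Real.sin (π * (((k : ℝ) + 1) / n))
      = Real.sin (((k : ℝ) + 1) * π / n) := by
    intro k _
    congr 1
    ring
  rw [Finset.prod_congr rfl harg, sin_prod n hn]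
  rw [mul_pow]
  have h2 : (0:ℝ) < 2 ^ (n-1) := by positivity
  have hn' : (0:ℝ) < n := by positivity
  field_simp

lemma gauss_mult (m : ℕ) (hm : 2 ≤ m) (x : ℝ) (hx : 0 < x) :
    ∏ k ∈ Finset.range m, Real.Gamma ((x + k) / m)
      = (m : ℝ) ^ ((1:ℝ) - x) *
        (∏ k ∈ Finset.range (m - 1), Real.Gamma (((k : ℝ) + 1) / m)) * Real.Gamma x := by
  have hm0 : (0:ℝ) < m := by positivity
  set G1 : ℝ := ∏ k ∈ Finset.range (m - 1), Real.Gamma (((k : ℝ) + 1) / m) with hG1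
  have hG1pos : 0 < G1 := by
    apply Finset.prod_pos
    intro k _
    apply Real.Gamma_pos_of_pos
    positivity
  set D : ℝ := (m : ℝ) * G1 with hD
  have hDpos : 0 < D := by positivity
  set f : ℝ → ℝ := fun y => (m : ℝ) ^ y * (∏ k ∈ Finset.range m, Real.Gamma ((y + k) / m)) / D
    with hf
  have hGpos : ∀ y : ℝ, 0 < y → ∀ k ∈ Finset.range m, 0 < Real.Gamma ((y + k) / m) := by
    intro y hy k _
    apply Real.Gamma_pos_of_pos
    positivity
  have hf_pos : ∀ {y : ℝ}, 0 < y → 0 < f y := by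
    intro y hy
    apply div_pos _ hDpos
    apply mul_pos (Real.rpow_pos_of_pos hm0 y)
    exact Finset.prod_pos (hGpos y hy)
  have hprod_one : ∏ k ∈ Finset.range m, Real.Gamma ((1 + (k : ℝ)) / m) = G1 := by
    have hm1 : m = (m - 1) + 1 := by omega
    rw [hm1, Finset.prod_range_succ]
    have hlast : ((1 : ℝ) + ((m - 1 : ℕ) : ℝ)) / ((m - 1 : ℕ) + 1 : ℕ) = 1 := by
      rw [Nat.cast_sub (by omega : 1 ≤ m)]
      push_cast
      field_simp
      rw [Nat.cast_sub (by omega : 1 ≤ m), Nat.cast_one]; ring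
    rw [hlast, Real.Gamma_one, mul_one, hG1]
    apply Finset.prod_congr rfl
    intro k _
    congr 1
    rw [← hm1]
    ring
  have hf_one : f 1 = 1 := by
    rw [hf]
    simp only [Real.rpow_one]
    rw [hprod_one]
    rw [hD]
    field_simp
  have hshift : ∀ y : ℝ, 0 < y →
      (∏ k ∈ Finset.range m, Real.Gamma ((y + 1 + k) / m))
        = (∏ k ∈ Finset.range m, Real.Gamma ((y + k) / m)) * (y / m) := by
    intro y hy
    have hΓ0 : Real.Gamma (y / m) ≠ 0 := (Real.Gamma_pos_of_pos (by positivity)).ne'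
    have A := Finset.prod_range_succ' (fun k => Real.Gamma ((y + k) / m)) m
    have B := Finset.prod_range_succ (fun k => Real.Gamma ((y + k) / m)) m
    have hlast : Real.Gamma ((y + (m : ℝ)) / m) = (y / m) * Real.Gamma (y / m) := by
      have : (y + (m : ℝ)) / m = y / m + 1 := by field_simp
      rw [this, Real.Gamma_add_one (div_pos hy hm0).ne']
    have hA : (∏ k ∈ Finset.range m, Real.Gamma ((y + 1 + k) / m)) * Real.Gamma (y / m)
        = ∏ k ∈ Finset.range (m + 1), Real.Gamma ((y + k) / m) := by
      rw [A]
      simp only [Nat.cast_zero, add_zero]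
      congr 1
      apply Finset.prod_congr rfl
      intro k _
      congr 1
      push_cast
      ring
    have hB : (∏ k ∈ Finset.range (m + 1), Real.Gamma ((y + k) / m))
        = (∏ k ∈ Finset.range m, Real.Gamma ((y + k) / m)) * ((y / m) * Real.Gamma (y / m)) := by
      rw [B, hlast]
    apply mul_right_cancel₀ hΓ0
    rw [hA, hB]
    ring
  have hf_feq : ∀ {y : ℝ}, 0 < y → f (y + 1) = y * f y := by
    intro y hy
    rw [hf]
    simp only
    rw [hshift y hy, Real.rpow_add hm0, Real.rpow_one]
    field_simp
  -- log convexity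
  have hconv : ConvexOn ℝ (Set.Ioi 0) (Real.log ∘ f) := by
    have heq : Set.EqOn (Real.log ∘ f)
        (fun y => y * Real.log m +
          (∑ k ∈ Finset.range m, Real.log (Real.Gamma ((y + k) / m))) - Real.log D)
        (Set.Ioi 0) := by
      intro y hy
      have hy' : 0 < y := Set.mem_Ioi.mp hy
      simp only [Function.comp_apply, hf]
      rw [Real.log_div (mul_pos (Real.rpow_pos_of_pos hm0 y)
        (Finset.prod_pos (hGpos y hy'))).ne' hDpos.ne']
      rw [Real.log_mul (Real.rpow_pos_of_pos hm0 y).ne'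
        (Finset.prod_pos (hGpos y hy')).ne']
      rw [Real.log_rpow hm0, Real.log_prod (fun k hk => (hGpos y hy' k hk).ne')]
    refine ConvexOn.congr ?_ heq.symm
    constructor
    · exact convex_Ioi 0
    · intro p hp q hq a b ha hb hab
      simp only [smul_eq_mul]
      have hterm : ∀ k ∈ Finset.range m,
          Real.log (Real.Gamma ((a * p + b * q + k) / m))
            ≤ a * Real.log (Real.Gamma ((p + k) / m))
              + b * Real.log (Real.Gamma ((q + k) / m)) := by
        intro k _
        have hk0 : (0:ℝ) ≤ (k:ℝ) := Nat.cast_nonneg k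
        have hp' : (p + (k:ℝ)) / m ∈ Set.Ioi (0:ℝ) := by
          simp only [Set.mem_Ioi] at hp ⊢
          exact div_pos (by linarith) hm0
        have hq' : (q + (k:ℝ)) / m ∈ Set.Ioi (0:ℝ) := by
          simp only [Set.mem_Ioi] at hq ⊢
          exact div_pos (by linarith) hm0
        have := Real.convexOn_log_Gamma.2 hp' hq' ha hb hab
        simp only [smul_eq_mul, Function.comp_apply] at this
        have harg : a * ((p + (k:ℝ)) / m) + b * ((q + (k:ℝ)) / m)
            = (a * p + b * q + k) / m := by
          field_simp
          nlinarith [hab]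
        rwa [harg] at this
      have hsum := Finset.sum_le_sum hterm
      rw [Finset.sum_add_distrib, ← Finset.mul_sum, ← Finset.mul_sum] at hsum
      have e2 : a * (p * Real.log m
            + (∑ k ∈ Finset.range m, Real.log (Real.Gamma ((p + k) / m))) - Real.log D)
          + b * (q * Real.log m
            + (∑ k ∈ Finset.range m, Real.log (Real.Gamma ((q + k) / m))) - Real.log D)
          = ((a * p + b * q) * Real.log m - Real.log D)
            + (a * (∑ k ∈ Finset.range m, Real.log (Real.Gamma ((p + k) / m)))
              + b * (∑ k ∈ Finset.range m, Real.log (Real.Gamma ((q + k) / m)))) := by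
        linear_combination (-Real.log D) * hab
      linarith [hsum, e2]
  have heqG := Real.eq_Gamma_of_log_convex hconv hf_feq hf_pos hf_one
  have hfx : f x = Real.Gamma x := heqG (Set.mem_Ioi.mpr hx)
  rw [hf] at hfx
  simp only at hfx
  have hmx : (0:ℝ) < (m:ℝ) ^ x := Real.rpow_pos_of_pos hm0 x
  have : (m : ℝ) ^ x * (∏ k ∈ Finset.range m, Real.Gamma ((x + k) / m)) = Real.Gamma x * D := by
    field_simp at hfx
    linarith [hfx]
  have hpow : (m : ℝ) ^ ((1:ℝ) - x) = (m : ℝ) / (m : ℝ) ^ x := by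
    rw [Real.rpow_sub hm0, Real.rpow_one]
  rw [hpow]
  rw [hD] at this
  field_simp
  nlinarith [this]

/-- For an integer `m ≥ 2` and real `s > 0`,
`∏_{k=0}^{m-1} Γ((s+1+k)/m)^{(2k+1-m)/m} / ∏_{k=0}^{m-1} Γ((s+k)/m)^{(2k+1-m)/m}
 = Γ(s/m)^{(m+1)/m} Γ(s/m + 1)^{(m-1)/m} / ((2π)^{(m-1)/m} m^{(1-2s)/m} Γ(s)^{2/m})`,
with real powers of positive reals and `Γ` the real Gamma function. -/
theorem Zell_single_factor_quotient (m : ℕ) (hm : 2 ≤ m) (s : ℝ) (hs : 0 < s) :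
    (∏ k ∈ Finset.range m,
        Real.Gamma ((s + 1 + k) / m) ^ ((2 * (k : ℝ) + 1 - m) / m)) /
      (∏ k ∈ Finset.range m,
        Real.Gamma ((s + k) / m) ^ ((2 * (k : ℝ) + 1 - m) / m)) =
    Real.Gamma (s / m) ^ (((m : ℝ) + 1) / m) *
        Real.Gamma (s / m + 1) ^ (((m : ℝ) - 1) / m) /
      ((2 * Real.pi) ^ (((m : ℝ) - 1) / m) * (m : ℝ) ^ ((1 - 2 * s) / m) *
        Real.Gamma s ^ (2 / (m : ℝ))) := by
  have hM : (0:ℝ) < m := by positivity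
  have hMne : (m:ℝ) ≠ 0 := hM.ne'
  -- positivity of all Gamma values
  have hG0 : ∀ k : ℕ, 0 < Real.Gamma ((s + k) / m) := fun k =>
    Real.Gamma_pos_of_pos (by positivity)
  have hG1' : ∀ k : ℕ, 0 < Real.Gamma ((s + 1 + k) / m) := fun k =>
    Real.Gamma_pos_of_pos (by positivity)
  have hGs : 0 < Real.Gamma s := Real.Gamma_pos_of_pos hs
  have hGsm : 0 < Real.Gamma (s / m) := Real.Gamma_pos_of_pos (by positivity)
  have hGsm1 : 0 < Real.Gamma (s / m + 1) := Real.Gamma_pos_of_pos (by positivity)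
  have hG1pos : 0 < ∏ k ∈ Finset.range (m - 1), Real.Gamma (((k : ℝ) + 1) / m) :=
    Finset.prod_pos fun k _ => Real.Gamma_pos_of_pos (by positivity)
  set G1 : ℝ := ∏ k ∈ Finset.range (m - 1), Real.Gamma (((k : ℝ) + 1) / m) with hG1def
  -- both sides positive
  have hnum : 0 < ∏ k ∈ Finset.range m,
      Real.Gamma ((s + 1 + k) / m) ^ ((2 * (k : ℝ) + 1 - m) / m) :=
    Finset.prod_pos fun k _ => Real.rpow_pos_of_pos (hG1' k) _
  have hden : 0 < ∏ k ∈ Finset.range m,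
      Real.Gamma ((s + k) / m) ^ ((2 * (k : ℝ) + 1 - m) / m) :=
    Finset.prod_pos fun k _ => Real.rpow_pos_of_pos (hG0 k) _
  have hLpos : 0 < (∏ k ∈ Finset.range m,
        Real.Gamma ((s + 1 + k) / m) ^ ((2 * (k : ℝ) + 1 - m) / m)) /
      (∏ k ∈ Finset.range m,
        Real.Gamma ((s + k) / m) ^ ((2 * (k : ℝ) + 1 - m) / m)) := div_pos hnum hden
  have hRpos : 0 < Real.Gamma (s / m) ^ (((m : ℝ) + 1) / m) *
        Real.Gamma (s / m + 1) ^ (((m : ℝ) - 1) / m) /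
      ((2 * Real.pi) ^ (((m : ℝ) - 1) / m) * (m : ℝ) ^ ((1 - 2 * s) / m) *
        Real.Gamma s ^ (2 / (m : ℝ))) := by
    apply div_pos
    · exact mul_pos (Real.rpow_pos_of_pos hGsm _) (Real.rpow_pos_of_pos hGsm1 _)
    · exact mul_pos (mul_pos (Real.rpow_pos_of_pos (by positivity) _)
        (Real.rpow_pos_of_pos hM _)) (Real.rpow_pos_of_pos hGs _)
  apply Real.log_injOn_pos (Set.mem_Ioi.mpr hLpos) (Set.mem_Ioi.mpr hRpos)
  -- compute the logs
  have hlogG1 : 2 * Real.log G1 = ((m:ℝ) - 1) * Real.log (2*π) - Real.log m := by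
    have h := congrArg Real.log (G1_sq m hm)
    rw [Real.log_pow, Real.log_div (pow_ne_zero _ (by positivity)) hMne, Real.log_pow] at h
    have hc : ((m - 1 : ℕ) : ℝ) = (m:ℝ) - 1 := by
      rw [Nat.cast_sub (by omega)]; norm_num
    rw [hc] at h
    push_cast at h ⊢
    linarith
  have hsumlog : ∑ k ∈ Finset.range m, Real.log (Real.Gamma ((s + k) / m))
      = (1 - s) * Real.log m + Real.log G1 + Real.log (Real.Gamma s) := by
    rw [← Real.log_prod (fun k _ => (hG0 k).ne'), gauss_mult m hm s hs,
      Real.log_mul (by positivity) hGs.ne',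
      Real.log_mul (Real.rpow_pos_of_pos hM _).ne' hG1pos.ne', Real.log_rpow hM]
  -- shift identity for numerator sum
  have hshift : ∀ k : ℕ, (s + 1 + (k:ℝ)) / m = (s + ((k+1 : ℕ) : ℝ)) / m := by
    intro k; push_cast; ring
  set L : ℕ → ℝ := fun k => Real.log (Real.Gamma ((s + (k:ℝ)) / m)) with hLdef
  set c : ℕ → ℝ := fun k => (2 * (k:ℝ) + 1 - m) / m with hcdef
  have hlogL : Real.log ((∏ k ∈ Finset.range m,
        Real.Gamma ((s + 1 + k) / m) ^ ((2 * (k : ℝ) + 1 - m) / m)) /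
      (∏ k ∈ Finset.range m,
        Real.Gamma ((s + k) / m) ^ ((2 * (k : ℝ) + 1 - m) / m)))
      = (∑ k ∈ Finset.range m, c k * L (k+1)) - ∑ k ∈ Finset.range m, c k * L k := by
    rw [Real.log_div hnum.ne' hden.ne', Real.log_prod
        (fun k _ => (Real.rpow_pos_of_pos (hG1' k) _).ne'),
      Real.log_prod (fun k _ => (Real.rpow_pos_of_pos (hG0 k) _).ne')]
    congr 1
    · apply Finset.sum_congr rfl
      intro k _
      rw [Real.log_rpow (hG1' k), hcdef, hLdef]
      simp only
      rw [hshift k]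
    · apply Finset.sum_congr rfl
      intro k _
      rw [Real.log_rpow (hG0 k)]
  -- telescoping
  have htel : (∑ k ∈ Finset.range m, c k * L (k+1)) - ∑ k ∈ Finset.range m, c k * L k
      = (((m:ℝ) - 1) / m) * L m + (((m:ℝ) + 1) / m) * L 0
        - (2 / m) * ∑ k ∈ Finset.range m, L k := by
    have hstep : ∀ k : ℕ, c k * L (k+1) = c (k+1) * L (k+1) - (2 / m) * L (k+1) := by
      intro k
      have : c k = c (k+1) - 2 / m := by
        rw [hcdef]; simp only; push_cast; field_simp; ring
      rw [this]; ring
    rw [Finset.sum_congr rfl (fun k _ => hstep k), Finset.sum_sub_distrib, ← Finset.mul_sum]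
    have h1 : ∑ k ∈ Finset.range m, c (k+1) * L (k+1)
        = (∑ k ∈ Finset.range m, c k * L k) + c m * L m - c 0 * L 0 := by
      have := Finset.sum_range_succ' (fun k => c k * L k) m
      have h2 := Finset.sum_range_succ (fun k => c k * L k) m
      rw [h2] at this
      linarith [this]
    have h3 : ∑ k ∈ Finset.range m, L (k+1)
        = (∑ k ∈ Finset.range m, L k) + L m - L 0 := by
      have := Finset.sum_range_succ' (fun k => L k) m
      have h4 := Finset.sum_range_succ (fun k => L k) m
      rw [h4] at this
      linarith [this]
    rw [h1, h3]
    have hcm : c m = ((m:ℝ) + 1) / m := by rw [hcdef]; simp only; ring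
    have hc0 : c 0 = (1 - (m:ℝ)) / m := by rw [hcdef]; simp only; push_cast; ring
    rw [hcm, hc0]
    field_simp
    ring
  have hLm : L m = Real.log (Real.Gamma (s / m + 1)) := by
    rw [hLdef]
    simp only
    congr 2
    field_simp
  have hL0 : L 0 = Real.log (Real.Gamma (s / m)) := by
    rw [hLdef]; simp only; norm_num
  -- log of RHS
  have hlogR : Real.log (Real.Gamma (s / m) ^ (((m : ℝ) + 1) / m) *
        Real.Gamma (s / m + 1) ^ (((m : ℝ) - 1) / m) /
      ((2 * Real.pi) ^ (((m : ℝ) - 1) / m) * (m : ℝ) ^ ((1 - 2 * s) / m) *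
        Real.Gamma s ^ (2 / (m : ℝ))))
      = (((m:ℝ) + 1) / m) * Real.log (Real.Gamma (s / m))
        + (((m:ℝ) - 1) / m) * Real.log (Real.Gamma (s / m + 1))
        - ((((m:ℝ) - 1) / m) * Real.log (2 * π)
          + ((1 - 2*s) / m) * Real.log m + (2 / m) * Real.log (Real.Gamma s)) := by
    rw [Real.log_div (by positivity) (by positivity),
      Real.log_mul (by positivity) (by positivity),
      Real.log_mul (by positivity) (by positivity),
      Real.log_mul (by positivity) (by positivity),
      Real.log_rpow hGsm, Real.log_rpow hGsm1, Real.log_rpow (by positivity),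
      Real.log_rpow hM, Real.log_rpow hGs]
  rw [hlogL, htel, hLm, hL0, hsumlog, hlogR]
  field_simp
  linear_combination -hlogG1
end

section
/- Let $v \ge 0$ and let $m_1, \dots, m_v$ be integers with $m_j \ge 2$. With $Z_{\mathrm{ell}}(s) = \prod_{j=1}^{v}\prod_{k=0}^{m_j-1} \Gamma\!\left(\tfrac{s+k}{m_j}\right)^{\frac{2k+1-m_j}{m_j}}$ (real powers of positive reals, real Gamma function), one has the one-sided limit $\lim_{s \to 0^+}\ s^{-\sum_{j=1}^{v}\left(1 - \frac{1}{m_j}\right)}\, Z_{\mathrm{ell}}(s) = \prod_{j=1}^{v}\left[ m_j^{\frac{1-m_j}{m_j}} \prod_{k=1}^{m_j-1} \Gamma\!\left(\tfrac{k}{m_j}\right)^{\frac{2k+1-m_j}{m_j}} \right]$; in particular the limit is a positive real number, so $Z_{\mathrm{ell}}(s)$ vanishes to order $\sum_{j=1}^{v}(1-\tfrac{1}{m_j})$ as $s \to 0^+$. -/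
open Real Finset Filter Topology

private lemma rpow_finset_sum {ι : Type*} {s : ℝ} (hs : 0 < s) (t : Finset ι) (f : ι → ℝ) :
    s ^ (∑ i ∈ t, f i) = ∏ i ∈ t, s ^ f i := by
  classical
  induction t using Finset.cons_induction with
  | empty => simp
  | cons a t ha ih => rw [Finset.sum_cons, Finset.prod_cons, Real.rpow_add hs, ih]

private lemma aux_factor (M : ℕ) (hM : 2 ≤ M) (s : ℝ) (hs : 0 < s) :
    ∏ k ∈ Finset.range M, Real.Gamma ((s + k) / M) ^ ((2 * (k : ℝ) + 1 - M) / M)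
      = s ^ (1 - 1 / (M : ℝ)) *
        ((M : ℝ) ^ ((1 - (M : ℝ)) / M) * Real.Gamma (s / M + 1) ^ ((1 - (M : ℝ)) / M) *
          ∏ k ∈ Finset.Icc 1 (M - 1),
            Real.Gamma ((s + k) / M) ^ ((2 * (k : ℝ) + 1 - M) / M)) := by
  have hM0 : (0 : ℝ) < M := by positivity
  have hIco : Finset.Ico 1 M = Finset.Icc 1 (M - 1) := by
    rw [← Finset.Ico_add_one_right_eq_Icc]; congr 1; omega
  rw [Finset.range_eq_Ico, Finset.prod_eq_prod_Ico_succ_bot (by omega : 0 < M), hIco]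
  have hsM : (0 : ℝ) < s / M := by positivity
  have hG : Real.Gamma (s / M) = Real.Gamma (s / M + 1) * (s / M)⁻¹ := by
    rw [Real.Gamma_add_one hsM.ne']; field_simp
  have hGpos : 0 < Real.Gamma (s / M + 1) := Real.Gamma_pos_of_pos (by positivity)
  have h0 : Real.Gamma ((s + (0:ℕ)) / M) ^ ((2 * ((0:ℕ) : ℝ) + 1 - M) / M)
      = s ^ (1 - 1 / (M : ℝ)) *
        ((M : ℝ) ^ ((1 - (M : ℝ)) / M) * Real.Gamma (s / M + 1) ^ ((1 - (M : ℝ)) / M)) := by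
    push_cast
    rw [add_zero, mul_zero, zero_add, hG,
      Real.mul_rpow hGpos.le (by positivity),
      Real.inv_rpow hsM.le, ← Real.rpow_neg hsM.le,
      Real.div_rpow hs.le hM0.le]
    have h1 : -((1 - (M : ℝ)) / M) = 1 - 1 / (M : ℝ) := by field_simp; ring
    have h2 : s ^ (1 - 1 / (M:ℝ)) / (M:ℝ) ^ (1 - 1/(M:ℝ))
        = s ^ (1 - 1 / (M:ℝ)) * (M:ℝ) ^ ((1 - (M:ℝ))/M) := by
      rw [div_eq_mul_inv, ← Real.rpow_neg hM0.le]
      congr 1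
      field_simp
      congr 1; ring
    rw [h1, h2]; ring
  rw [h0]; ring

/-- For integers `m₁, …, m_v ≥ 2`, with
`Z_ell(s) = ∏_j ∏_{k=0}^{m_j-1} Γ((s+k)/m_j)^{(2k+1-m_j)/m_j}` (real powers of
positive reals, real Gamma function), one has
`lim_{s → 0⁺} s^{-∑_j (1 - 1/m_j)} Z_ell(s)
  = ∏_j [ m_j^{(1-m_j)/m_j} ∏_{k=1}^{m_j-1} Γ(k/m_j)^{(2k+1-m_j)/m_j} ]`,
and this limit is positive, so `Z_ell` vanishes to order `∑_j (1 - 1/m_j)`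
as `s → 0⁺`. -/
theorem Zell_leading_behavior_at_zero (v : ℕ) (m : Fin v → ℕ)
    (hm : ∀ j, 2 ≤ m j) :
    Filter.Tendsto
      (fun s : ℝ =>
        s ^ (-(∑ j, (1 - 1 / (m j : ℝ)))) *
          ∏ j, ∏ k ∈ Finset.range (m j),
            Real.Gamma ((s + k) / m j) ^ ((2 * (k : ℝ) + 1 - m j) / m j))
      (nhdsWithin 0 (Set.Ioi 0))
      (nhds (∏ j, ((m j : ℝ) ^ ((1 - (m j : ℝ)) / m j) *
        ∏ k ∈ Finset.Icc 1 (m j - 1),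
          Real.Gamma ((k : ℝ) / m j) ^ ((2 * (k : ℝ) + 1 - m j) / m j)))) ∧
    0 < ∏ j, ((m j : ℝ) ^ ((1 - (m j : ℝ)) / m j) *
        ∏ k ∈ Finset.Icc 1 (m j - 1),
          Real.Gamma ((k : ℝ) / m j) ^ ((2 * (k : ℝ) + 1 - m j) / m j)) := by
  have hm0 : ∀ j, (0 : ℝ) < m j := fun j => by
    have := hm j; positivity
  -- the auxiliary continuous function
  set G : ℝ → ℝ := fun s => ∏ j, ((m j : ℝ) ^ ((1 - (m j : ℝ)) / m j) *
      Real.Gamma (s / m j + 1) ^ ((1 - (m j : ℝ)) / m j) *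
      ∏ k ∈ Finset.Icc 1 (m j - 1),
        Real.Gamma ((s + k) / m j) ^ ((2 * (k : ℝ) + 1 - m j) / m j)) with hGdef
  have hGcont : ContinuousAt G 0 := by
    apply tendsto_finset_prod
    intro j _
    apply ContinuousAt.mul
    · apply ContinuousAt.mul continuousAt_const
      apply ContinuousAt.rpow_const
      · apply (Real.differentiableAt_Gamma ?_).continuousAt.comp
        · exact (continuousAt_id.div_const _).add continuousAt_const
        · intro n
          simp only [zero_div, zero_add]
          intro h
          have hn : (0:ℝ) ≤ n := n.cast_nonneg
          linarith
      · left
        have : (0:ℝ)/(m j) + 1 = 1 := by simp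
        rw [this, Real.Gamma_one]; norm_num
    · apply tendsto_finset_prod
      intro k hk
      have hk1 : 1 ≤ k := (Finset.mem_Icc.mp hk).1
      have hkm : (0:ℝ) < (0 + k) / m j := by
        have : (0:ℝ) < (k:ℝ) := by exact_mod_cast hk1
        rw [zero_add]; exact div_pos this (hm0 j)
      apply ContinuousAt.rpow_const
      · apply (Real.differentiableAt_Gamma ?_).continuousAt.comp
        · exact (continuousAt_id.add continuousAt_const).div_const _
        · intro n h
          have : (0:ℝ) ≤ n := n.cast_nonneg
          rw [h] at hkm; linarith
      · left; exact (Real.Gamma_pos_of_pos hkm).ne'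
  have hG0 : G 0 = ∏ j, ((m j : ℝ) ^ ((1 - (m j : ℝ)) / m j) *
      ∏ k ∈ Finset.Icc 1 (m j - 1),
        Real.Gamma ((k : ℝ) / m j) ^ ((2 * (k : ℝ) + 1 - m j) / m j)) := by
    apply Finset.prod_congr rfl
    intro j _
    rw [zero_div, zero_add, Real.Gamma_one, Real.one_rpow, mul_one]
    congr 1
    apply Finset.prod_congr rfl
    intro k _
    rw [zero_add]
  constructor
  · have htd : Filter.Tendsto G (nhdsWithin 0 (Set.Ioi 0))
        (nhds (∏ j, ((m j : ℝ) ^ ((1 - (m j : ℝ)) / m j) *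
          ∏ k ∈ Finset.Icc 1 (m j - 1),
            Real.Gamma ((k : ℝ) / m j) ^ ((2 * (k : ℝ) + 1 - m j) / m j)))) := by
      rw [← hG0]
      exact hGcont.continuousWithinAt.tendsto
    apply htd.congr'
    filter_upwards [self_mem_nhdsWithin] with s hs
    have hs : (0:ℝ) < s := hs
    have key : ∏ j, ∏ k ∈ Finset.range (m j),
        Real.Gamma ((s + k) / m j) ^ ((2 * (k : ℝ) + 1 - m j) / m j)
        = s ^ (∑ j, (1 - 1 / (m j : ℝ))) * G s := by
      rw [rpow_finset_sum hs, ← Finset.prod_mul_distrib]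
      exact Finset.prod_congr rfl fun j _ => aux_factor (m j) (hm j) s hs
    rw [key, ← mul_assoc, Real.rpow_neg hs.le,
      inv_mul_cancel₀ (Real.rpow_pos_of_pos hs _).ne', one_mul]
  · apply Finset.prod_pos
    intro j _
    apply mul_pos (Real.rpow_pos_of_pos (hm0 j) _)
    apply Finset.prod_pos
    intro k hk
    have hk1 : 1 ≤ k := (Finset.mem_Icc.mp hk).1
    apply Real.rpow_pos_of_pos
    apply Real.Gamma_pos_of_pos
    have hk' : (0:ℝ) < (k:ℝ) := by exact_mod_cast hk1
    exact div_pos hk' (hm0 j)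
end
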